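/- Let β : ℝ → ℝ be continuous and define, for g ∈ L²([-π,π]), the operator Jg(x) = Π(x)·∫₀ˣ β(y)·g(y)/Π(y) dy where Π(x) = exp(i∫₀ˣ β(y)dy). Assume β is even and let κ₁(x) := ∫₀ˣ β(y)² dy. Then ‖Jg‖²_{L²([-π,π])} ≤ ‖κ₁‖_{L¹([0,π])}·‖g‖²_{L²([-π,π])}. -/

import Mathlib

open MeasureTheory
set_option maxHeartbeats 1000000

private lemma cs_aux {μ : Measure ℝ} (f : ℝ → ℝ) (g : ℝ → ℂ)
    (hf : MemLp f 2 μ) (hg : MemLp g 2 μ) :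
    (∫ a, ‖f a‖ * ‖g a‖ ∂μ) ^ 2 ≤ (∫ a, ‖f a‖ ^ 2 ∂μ) * (∫ a, ‖g a‖ ^ 2 ∂μ) := by
  have hpq : Real.HolderConjugate 2 2 := Real.HolderConjugate.two_two
  have h2 : ENNReal.ofReal (2:ℝ) = 2 := by norm_num [ENNReal.ofReal_ofNat]
  have H := MeasureTheory.integral_mul_norm_le_Lp_mul_Lq (μ := μ) hpq
    (f := f) (g := fun a => ‖g a‖)
    (by rw [h2]; exact hf) (by rw [h2]; exact hg.norm)
  have hrw : ∀ x : ℝ, 0 ≤ x → x ^ (2:ℝ) = x ^ 2 := fun x hx => by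
    rw [show (2:ℝ) = ((2:ℕ):ℝ) by norm_num, Real.rpow_natCast]
  simp_rw [norm_norm] at H
  simp_rw [hrw _ (norm_nonneg _)] at H
  have hA : 0 ≤ ∫ a, ‖f a‖ ^ 2 ∂μ := integral_nonneg fun a => by positivity
  have hB : 0 ≤ ∫ a, ‖g a‖ ^ 2 ∂μ := integral_nonneg fun a => by positivity
  have hL : 0 ≤ ∫ a, ‖f a‖ * ‖g a‖ ∂μ := integral_nonneg fun a => by positivity
  calc (∫ a, ‖f a‖ * ‖g a‖ ∂μ) ^ 2
      ≤ ((∫ a, ‖f a‖ ^ 2 ∂μ) ^ (1/(2:ℝ)) * (∫ a, ‖g a‖ ^ 2 ∂μ) ^ (1/(2:ℝ))) ^ 2 :=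
        pow_le_pow_left₀ hL H 2
    _ = (∫ a, ‖f a‖ ^ 2 ∂μ) * (∫ a, ‖g a‖ ^ 2 ∂μ) := by
        rw [mul_pow, ← Real.rpow_natCast (_ ^ (1/(2:ℝ))) 2, ← Real.rpow_natCast (_ ^ (1/(2:ℝ))) 2,
          ← Real.rpow_mul hA, ← Real.rpow_mul hB]
        norm_num

theorem stmt14 (β : ℝ → ℝ) (hβ : Continuous β) (hβeven : ∀ x, β (-x) = β x)
    (g : ℝ → ℂ) (hgm : AEStronglyMeasurable g volume)
    (hg2 : IntervalIntegrable (fun x => ‖g x‖ ^ 2) volume (-Real.pi) Real.pi) :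
    (∫ x in (-Real.pi)..Real.pi,
        ‖Complex.exp (Complex.I * ((∫ y in (0:ℝ)..x, β y : ℝ) : ℂ)) *
            ∫ y in (0:ℝ)..x,
              (β y : ℂ) * g y /
                Complex.exp (Complex.I * ((∫ t in (0:ℝ)..y, β t : ℝ) : ℂ))‖ ^ 2)
      ≤ (∫ x in (0:ℝ)..Real.pi, ∫ y in (0:ℝ)..x, (β y) ^ 2) *
          ∫ x in (-Real.pi)..Real.pi, ‖g x‖ ^ 2 := by
  have hπ : (0:ℝ) ≤ Real.pi := Real.pi_pos.le
  have hnegπ : -Real.pi ≤ Real.pi := by linarith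
  set Φ : ℝ → ℂ := fun x => Complex.exp (Complex.I * ((∫ t in (0:ℝ)..x, β t : ℝ) : ℂ)) with hΦdef
  have hΦnorm : ∀ x, ‖Φ x‖ = 1 := by
    intro x
    simp [hΦdef, Complex.norm_exp, Complex.mul_re]
  set h : ℝ → ℂ := fun y => (β y : ℂ) * g y / Φ y with hhdef
  have hnorm : ∀ y, ‖h y‖ = |β y| * ‖g y‖ := by
    intro y
    simp only [hhdef, norm_div, norm_mul, hΦnorm, div_one, Complex.norm_real, Real.norm_eq_abs]
  have hprim : Continuous fun x => ∫ t in (0:ℝ)..x, β t :=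
    intervalIntegral.continuous_primitive (fun a b => hβ.intervalIntegrable a b) 0
  have hΦcont : Continuous Φ :=
    Complex.continuous_exp.comp (continuous_const.mul (Complex.continuous_ofReal.comp hprim))
  have hβ2cont : Continuous fun y => (β y) ^ 2 := hβ.pow 2
  have hg2' : IntegrableOn (fun x => ‖g x‖ ^ 2) (Set.Ioc (-Real.pi) Real.pi) volume :=
    (intervalIntegrable_iff_integrableOn_Ioc_of_le hnegπ).mp hg2
  have hΦinv : Continuous fun y => (Φ y)⁻¹ :=
    hΦcont.inv₀ fun x => Complex.exp_ne_zero _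
  have hhm : AEStronglyMeasurable h volume := by
    show AEStronglyMeasurable (fun y => (β y : ℂ) * g y / Φ y) volume
    simp only [div_eq_mul_inv]
    exact ((Complex.continuous_ofReal.comp hβ).aestronglyMeasurable.mul hgm).mul
      hΦinv.aestronglyMeasurable
  have hhint : IntervalIntegrable h volume (-Real.pi) Real.pi := by
    rw [intervalIntegrable_iff_integrableOn_Ioc_of_le hnegπ]
    have hb1 : IntegrableOn (fun y => (β y) ^ 2) (Set.Ioc (-Real.pi) Real.pi) volume :=
      hβ2cont.integrableOn_Ioc
    have hb2 := hb1.add hg2'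
    have hbound := hb2.div_const 2
    refine Integrable.mono' hbound hhm.restrict ?_
    refine Filter.Eventually.of_forall fun y => ?_
    show ‖h y‖ ≤ ((β y) ^ 2 + ‖g y‖ ^ 2) / 2
    rw [hnorm]
    nlinarith [sq_nonneg (|β y| - ‖g y‖), sq_abs (β y), abs_nonneg (β y), norm_nonneg (g y)]
  -- key pointwise Cauchy–Schwarz bound
  have key : ∀ a b : ℝ, -Real.pi ≤ a → a ≤ b → b ≤ Real.pi →
      ‖∫ y in a..b, h y‖ ^ 2 ≤ (∫ y in a..b, (β y) ^ 2) * (∫ y in a..b, ‖g y‖ ^ 2) := by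
    intro a b ha hab hb
    have hsub : Set.Ioc a b ⊆ Set.Ioc (-Real.pi) Real.pi := Set.Ioc_subset_Ioc ha hb
    have hβmem : MemLp β 2 (volume.restrict (Set.Ioc a b)) :=
      (memLp_two_iff_integrable_sq hβ.aestronglyMeasurable.restrict).mpr hβ2cont.integrableOn_Ioc
    have hgmem : MemLp g 2 (volume.restrict (Set.Ioc a b)) :=
      (memLp_two_iff_integrable_sq_norm hgm.restrict).mpr (hg2'.mono_set hsub)
    have CS := cs_aux β g hβmem hgmem
    have h1 : ‖∫ y in a..b, h y‖ ≤ ∫ y in a..b, |β y| * ‖g y‖ := by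
      refine (intervalIntegral.norm_integral_le_integral_norm hab).trans_eq ?_
      exact intervalIntegral.integral_congr fun y _ => hnorm y
    calc ‖∫ y in a..b, h y‖ ^ 2
        ≤ (∫ y in a..b, |β y| * ‖g y‖) ^ 2 := pow_le_pow_left₀ (norm_nonneg _) h1 2
      _ = (∫ y, ‖β y‖ * ‖g y‖ ∂(volume.restrict (Set.Ioc a b))) ^ 2 := by
          rw [intervalIntegral.integral_of_le hab]
          simp_rw [Real.norm_eq_abs]
      _ ≤ (∫ y, ‖β y‖ ^ 2 ∂(volume.restrict (Set.Ioc a b))) *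
            (∫ y, ‖g y‖ ^ 2 ∂(volume.restrict (Set.Ioc a b))) := CS
      _ = (∫ y in a..b, (β y) ^ 2) * (∫ y in a..b, ‖g y‖ ^ 2) := by
          rw [intervalIntegral.integral_of_le hab, intervalIntegral.integral_of_le hab]
          congr 1
          exact integral_congr_ae (Filter.Eventually.of_forall fun y => by
            simp [Real.norm_eq_abs, sq_abs])
  set F : ℝ → ℂ := fun x => ∫ y in (0:ℝ)..x, h y with hFdef
  set κ : ℝ → ℝ := fun x => ∫ y in (0:ℝ)..x, (β y) ^ 2 with hκdef
  have hκcont : Continuous κ :=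
    intervalIntegral.continuous_primitive (fun a b => hβ2cont.intervalIntegrable a b) 0
  have h0mem : (0:ℝ) ∈ Set.uIcc (-Real.pi) Real.pi :=
    Set.mem_uIcc.mpr (Or.inl ⟨by linarith, hπ⟩)
  have hFcont : ContinuousOn F (Set.uIcc (-Real.pi) Real.pi) :=
    intervalIntegral.continuousOn_primitive_interval' hhint h0mem
  have hIcont : ContinuousOn (fun x => ‖Φ x * F x‖ ^ 2) (Set.uIcc (-Real.pi) Real.pi) :=
    ((hΦcont.continuousOn.mul hFcont).norm.pow 2)
  have hsub1 : Set.uIcc (-Real.pi) (0:ℝ) ⊆ Set.uIcc (-Real.pi) Real.pi :=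
    Set.uIcc_subset_uIcc Set.left_mem_uIcc h0mem
  have hsub2 : Set.uIcc (0:ℝ) Real.pi ⊆ Set.uIcc (-Real.pi) Real.pi :=
    Set.uIcc_subset_uIcc h0mem Set.right_mem_uIcc
  have hIintneg : IntervalIntegrable (fun x => ‖Φ x * F x‖ ^ 2) volume (-Real.pi) 0 :=
    (hIcont.mono hsub1).intervalIntegrable
  have hIintpos : IntervalIntegrable (fun x => ‖Φ x * F x‖ ^ 2) volume 0 Real.pi :=
    (hIcont.mono hsub2).intervalIntegrable
  have hg2pos : IntervalIntegrable (fun x => ‖g x‖ ^ 2) volume 0 Real.pi :=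
    hg2.mono_set hsub2
  have hg2neg : IntervalIntegrable (fun x => ‖g x‖ ^ 2) volume (-Real.pi) 0 :=
    hg2.mono_set hsub1
  set Ap : ℝ := ∫ y in (0:ℝ)..Real.pi, ‖g y‖ ^ 2 with hApdef
  set Am : ℝ := ∫ y in (-Real.pi)..(0:ℝ), ‖g y‖ ^ 2 with hAmdef
  have hgnn : ∀ᵐ y ∂(volume.restrict (Set.Ioc (-Real.pi) Real.pi)),
      0 ≤ (fun x => ‖g x‖ ^ 2) y := Filter.Eventually.of_forall fun y => by positivity
  -- positive piece
  have pos : (∫ x in (0:ℝ)..Real.pi, ‖Φ x * F x‖ ^ 2) ≤ (∫ x in (0:ℝ)..Real.pi, κ x) * Ap := by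
    have step : ∀ x ∈ Set.Icc (0:ℝ) Real.pi, ‖Φ x * F x‖ ^ 2 ≤ κ x * Ap := by
      intro x hx
      rw [norm_mul, hΦnorm, one_mul]
      show ‖∫ y in (0:ℝ)..x, h y‖ ^ 2 ≤ κ x * Ap
      have hle : (∫ y in (0:ℝ)..x, ‖g y‖ ^ 2) ≤ Ap :=
        intervalIntegral.integral_mono_interval le_rfl hx.1 hx.2
          (Filter.Eventually.of_forall fun y => by positivity) hg2pos
      have hκnn : 0 ≤ ∫ y in (0:ℝ)..x, (β y) ^ 2 :=
        intervalIntegral.integral_nonneg hx.1 fun y _ => sq_nonneg _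
      calc ‖∫ y in (0:ℝ)..x, h y‖ ^ 2
          ≤ (∫ y in (0:ℝ)..x, (β y) ^ 2) * (∫ y in (0:ℝ)..x, ‖g y‖ ^ 2) :=
            key 0 x (by linarith) hx.1 hx.2
        _ ≤ (∫ y in (0:ℝ)..x, (β y) ^ 2) * Ap := mul_le_mul_of_nonneg_left hle hκnn
    calc (∫ x in (0:ℝ)..Real.pi, ‖Φ x * F x‖ ^ 2)
        ≤ ∫ x in (0:ℝ)..Real.pi, κ x * Ap :=
          intervalIntegral.integral_mono_on hπ hIintpos
            ((hκcont.mul continuous_const).intervalIntegrable _ _) step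
      _ = (∫ x in (0:ℝ)..Real.pi, κ x) * Ap := intervalIntegral.integral_mul_const _ _
  -- negative piece
  have neg : (∫ x in (-Real.pi)..(0:ℝ), ‖Φ x * F x‖ ^ 2) ≤ (∫ x in (0:ℝ)..Real.pi, κ x) * Am := by
    have step : ∀ x ∈ Set.Icc (-Real.pi) (0:ℝ), ‖Φ x * F x‖ ^ 2 ≤ κ (-x) * Am := by
      intro x hx
      rw [norm_mul, hΦnorm, one_mul]
      show ‖∫ y in (0:ℝ)..x, h y‖ ^ 2 ≤ κ (-x) * Am
      have hFx : ‖∫ y in (0:ℝ)..x, h y‖ = ‖∫ y in x..(0:ℝ), h y‖ := by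
        rw [intervalIntegral.integral_symm x 0, norm_neg]
      have hκeq : (∫ y in x..(0:ℝ), (β y) ^ 2) = κ (-x) := by
        have h1 : κ (-x) = ∫ y in (0:ℝ)..(-x), (β (-y)) ^ 2 :=
          (intervalIntegral.integral_congr fun y _ => by rw [hβeven]).symm
        rw [h1, intervalIntegral.integral_comp_neg fun y => (β y) ^ 2, neg_neg, neg_zero]
      have hle : (∫ y in x..(0:ℝ), ‖g y‖ ^ 2) ≤ Am :=
        intervalIntegral.integral_mono_interval hx.1 hx.2 le_rfl
          (Filter.Eventually.of_forall fun y => by positivity) hg2neg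
      have hκnn : 0 ≤ ∫ y in x..(0:ℝ), (β y) ^ 2 :=
        intervalIntegral.integral_nonneg hx.2 fun y _ => sq_nonneg _
      calc ‖∫ y in (0:ℝ)..x, h y‖ ^ 2 = ‖∫ y in x..(0:ℝ), h y‖ ^ 2 := by rw [hFx]
        _ ≤ (∫ y in x..(0:ℝ), (β y) ^ 2) * (∫ y in x..(0:ℝ), ‖g y‖ ^ 2) :=
            key x 0 hx.1 hx.2 hπ
        _ ≤ (∫ y in x..(0:ℝ), (β y) ^ 2) * Am := mul_le_mul_of_nonneg_left hle hκnn
        _ = κ (-x) * Am := by rw [hκeq]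
    calc (∫ x in (-Real.pi)..(0:ℝ), ‖Φ x * F x‖ ^ 2)
        ≤ ∫ x in (-Real.pi)..(0:ℝ), κ (-x) * Am :=
          intervalIntegral.integral_mono_on (by linarith) hIintneg
            (((hκcont.comp continuous_neg).mul continuous_const).intervalIntegrable _ _) step
      _ = (∫ x in (-Real.pi)..(0:ℝ), κ (-x)) * Am := intervalIntegral.integral_mul_const _ _
      _ = (∫ x in (0:ℝ)..Real.pi, κ x) * Am := by
          rw [intervalIntegral.integral_comp_neg κ, neg_zero, neg_neg]
  have split : (∫ x in (-Real.pi)..Real.pi, ‖Φ x * F x‖ ^ 2)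
      = (∫ x in (-Real.pi)..(0:ℝ), ‖Φ x * F x‖ ^ 2) + ∫ x in (0:ℝ)..Real.pi, ‖Φ x * F x‖ ^ 2 :=
    (intervalIntegral.integral_add_adjacent_intervals hIintneg hIintpos).symm
  have splitg : (∫ x in (-Real.pi)..Real.pi, ‖g x‖ ^ 2) = Am + Ap :=
    (intervalIntegral.integral_add_adjacent_intervals hg2neg hg2pos).symm
  show (∫ x in (-Real.pi)..Real.pi, ‖Φ x * F x‖ ^ 2)
      ≤ (∫ x in (0:ℝ)..Real.pi, κ x) * ∫ x in (-Real.pi)..Real.pi, ‖g x‖ ^ 2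
  rw [split, splitg, mul_add]
  exact add_le_add neg pos
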